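/- Let k ≥ 1, let a < b be real numbers, and let α : [a,b] → ℝ^k be a continuous unit-valued path that is not constant. Then the function D_α : [a,b] → ℕ, defined by D_α(s) = dim_ℚ {β ∈ ℚ^k : ∑_{i=1}^k β_i α_i(s) = 0}, is not constant on [a,b]; that is, there exist s, s' ∈ [a,b] with D_α(s) ≠ D_α(s'). -/

import Mathlib

/-- The `ℚ`-subspace of `ℚ^k` of rational vectors `β` with `∑ i, β i * c i = 0`. -/
def rationalRelationSpace (k : ℕ) (c : Fin k → ℝ) : Submodule ℚ (Fin k → ℚ) where
  carrier := {β | ∑ i, (β i : ℝ) * c i = 0}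
  add_mem' := by
    intro a b ha hb
    simp only [Set.mem_setOf_eq] at ha hb ⊢
    simp [Pi.add_apply, Rat.cast_add, add_mul, Finset.sum_add_distrib, ha, hb]
  zero_mem' := by simp
  smul_mem' := by
    intro q a ha
    simp only [Set.mem_setOf_eq] at ha ⊢
    simp [Pi.smul_apply, smul_eq_mul, Rat.cast_mul, mul_assoc, ← Finset.mul_sum, ha]

/-- `D_α(s)`: the `ℚ`-dimension of the space of rational linear relations among the
coordinates of `α s`. -/
noncomputable def Dalpha {k : ℕ} (α : ℝ → EuclideanSpace ℝ (Fin k)) (s : ℝ) : ℕ :=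
  Module.finrank ℚ (rationalRelationSpace k (fun i => α s i))

open Set

lemma mem_rrs {k : ℕ} {c : Fin k → ℝ} {β : Fin k → ℚ} :
    β ∈ rationalRelationSpace k c ↔ ∑ i, (β i : ℝ) * c i = 0 := Iff.rfl


lemma key_step {a b : ℝ} (F : ℕ → Set ℝ)
    (hclosed : ∀ n, IsClosed (F n))
    (hpair : ∀ m n, F m = F n ∨ Disjoint (F m) (F n))
    (hcover : Icc a b ⊆ ⋃ n, F n)
    (u v : ℝ) (hau : a ≤ u) (huv : u < v) (hvb : v ≤ b)
    (hnot : ∀ m, ¬ Icc u v ⊆ F m) (n : ℕ) :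
    ∃ u' v', a ≤ u' ∧ u' < v' ∧ v' ≤ b ∧ (∀ m, ¬ Icc u' v' ⊆ F m) ∧
      Icc u' v' ⊆ Icc u v ∧ Icc u' v' ∩ F n = ∅ := by
  by_cases hint : Icc u v ∩ F n = ∅
  · exact ⟨u, v, hau, huv, hvb, hnot, subset_rfl, hint⟩
  · obtain ⟨p, hpI, hpF⟩ := Set.nonempty_iff_ne_empty.2 hint
    obtain ⟨q, hqI, hqF⟩ : ∃ q ∈ Icc u v, q ∉ F n := by
      by_contra hcon; push_neg at hcon
      exact hnot n hcon
    obtain ⟨m, hqm⟩ : ∃ m, q ∈ F m := by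
      have := hcover (Icc_subset_Icc hau hvb hqI)
      simpa using this
    have hmn : Disjoint (F m) (F n) := by
      rcases hpair m n with h | h
      · exact absurd (h ▸ hqm) hqF
      · exact h
    have hqp : q ≠ p := fun h => hqF (h ▸ hpF)
    rcases hqp.lt_or_gt with hlt | hlt
    · -- q < p : take interval [q, c] with c < r := sInf (F n ∩ Icc q p)
      set S := F n ∩ Icc q p with hS
      have hSne : S.Nonempty := ⟨p, hpF, le_of_lt hlt, le_refl p⟩
      have hSclosed : IsClosed S := (hclosed n).inter isClosed_Icc
      have hSbdd : BddBelow S := ⟨q, fun x hx => hx.2.1⟩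
      set r := sInf S with hr
      have hrS : r ∈ S := hSclosed.csInf_mem hSne hSbdd
      have hqr : q < r := lt_of_le_of_ne hrS.2.1 (fun h => hqF (h ▸ hrS.1))
      have hrp : r ≤ p := hrS.2.2
      have hIco : ∀ t ∈ Ico q r, t ∉ F n := by
        intro t ht htF
        exact absurd (csInf_le hSbdd ⟨htF, ht.1, ht.2.le.trans hrp⟩) (not_le.2 ht.2)
      obtain ⟨c, hcmem, hc⟩ : ∃ c ∈ Ioo q r, ¬ Icc q c ⊆ F m := by
        by_contra hcon; push_neg at hcon
        have hIcoFm : Ico q r ⊆ F m := by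
          intro t ht
          rcases eq_or_lt_of_le ht.1 with h | h
          · exact h ▸ hqm
          · exact hcon t ⟨h, ht.2⟩ (right_mem_Icc.2 h.le)
        have : r ∈ F m := by
          have h1 : r ∈ closure (Ico q r) := by
            rw [closure_Ico hqr.ne]; exact right_mem_Icc.2 hqr.le
          exact ((closure_mono hIcoFm).trans (hclosed m).closure_eq.subset) h1
        exact (hmn.ne_of_mem this hrS.1) rfl
      refine ⟨q, c, hau.trans hqI.1, hcmem.1, (hcmem.2.le.trans (hrp.trans (hpI.2.trans hvb))),
        ?_, Icc_subset_Icc hqI.1 (hcmem.2.le.trans (hrp.trans hpI.2)), ?_⟩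
      · intro m' hm'
        have hqm' : q ∈ F m' := hm' (left_mem_Icc.2 hcmem.1.le)
        rcases hpair m' m with h | h
        · exact hc (h ▸ hm')
        · exact absurd rfl (h.ne_of_mem hqm' hqm)
      · ext t; simp only [mem_inter_iff, mem_empty_iff_false, iff_false, not_and]
        intro htI
        exact hIco t ⟨htI.1, htI.2.trans_lt hcmem.2⟩
    · -- p < q : symmetric, interval [c, q] with r := sSup (F n ∩ Icc p q) < c
      set S := F n ∩ Icc p q with hS
      have hSne : S.Nonempty := ⟨p, hpF, le_refl p, le_of_lt hlt⟩
      have hSclosed : IsClosed S := (hclosed n).inter isClosed_Icc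
      have hSbdd : BddAbove S := ⟨q, fun x hx => hx.2.2⟩
      set r := sSup S with hr
      have hrS : r ∈ S := hSclosed.csSup_mem hSne hSbdd
      have hqr : r < q := lt_of_le_of_ne hrS.2.2 (fun h => hqF (h ▸ hrS.1))
      have hrp : p ≤ r := hrS.2.1
      have hIoc : ∀ t ∈ Ioc r q, t ∉ F n := by
        intro t ht htF
        exact absurd (le_csSup hSbdd ⟨htF, hrp.trans ht.1.le, ht.2⟩) (not_le.2 ht.1)
      obtain ⟨c, hcmem, hc⟩ : ∃ c ∈ Ioo r q, ¬ Icc c q ⊆ F m := by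
        by_contra hcon; push_neg at hcon
        have hIocFm : Ioc r q ⊆ F m := by
          intro t ht
          rcases eq_or_lt_of_le ht.2 with h | h
          · exact h.symm ▸ hqm
          · exact hcon t ⟨ht.1, h⟩ (left_mem_Icc.2 ht.2)
        have : r ∈ F m := by
          have h1 : r ∈ closure (Ioc r q) := by
            rw [closure_Ioc hqr.ne]; exact left_mem_Icc.2 hqr.le
          exact ((closure_mono hIocFm).trans (hclosed m).closure_eq.subset) h1
        exact (hmn.ne_of_mem this hrS.1) rfl
      refine ⟨c, q, hau.trans ((hpI.1.trans hrp).trans hcmem.1.le), hcmem.2, hqI.2.trans hvb,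
        ?_, Icc_subset_Icc ((hpI.1.trans hrp).trans hcmem.1.le) hqI.2, ?_⟩
      · intro m' hm'
        have hqm' : q ∈ F m' := hm' (right_mem_Icc.2 hcmem.2.le)
        rcases hpair m' m with h | h
        · exact hc (h ▸ hm')
        · exact absurd rfl (h.ne_of_mem hqm' hqm)
      · ext t; simp only [mem_inter_iff, mem_empty_iff_false, iff_false, not_and]
        intro htI
        exact hIoc t ⟨hcmem.1.trans_le htI.1, htI.2⟩

lemma sierpinski_interval {a b : ℝ} (hab : a < b) (F : ℕ → Set ℝ)
    (hclosed : ∀ n, IsClosed (F n))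
    (hpair : ∀ m n, F m = F n ∨ Disjoint (F m) (F n))
    (hcover : Icc a b ⊆ ⋃ n, F n) :
    ∃ m, Icc a b ⊆ F m := by
  by_contra hcon; push_neg at hcon
  obtain ⟨hnot⟩ : Nonempty (∀ m, ¬ Icc a b ⊆ F m) := ⟨hcon⟩
  -- the type of "good" intervals
  set T := {p : ℝ × ℝ // a ≤ p.1 ∧ p.1 < p.2 ∧ p.2 ≤ b ∧ ∀ m, ¬ Icc p.1 p.2 ⊆ F m} with hT
  have key : ∀ (p : T) (n : ℕ), ∃ p' : T,
      Icc p'.1.1 p'.1.2 ⊆ Icc p.1.1 p.1.2 ∧ Icc p'.1.1 p'.1.2 ∩ F n = ∅ := by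
    rintro ⟨⟨u, v⟩, hau, huv, hvb, hn⟩ n
    obtain ⟨u', v', h1, h2, h3, h4, h5, h6⟩ :=
      key_step F hclosed hpair hcover u v hau huv hvb hn n
    exact ⟨⟨(u', v'), h1, h2, h3, h4⟩, h5, h6⟩
  choose step hstep1 hstep2 using key
  have p0 : T := ⟨(a, b), le_refl a, hab, le_refl b, hnot⟩
  let seq : ℕ → T := fun n => Nat.rec (step p0 0) (fun n ih => step ih (n + 1)) n
  have hseq0 : seq 0 = step p0 0 := rfl
  have hseqS : ∀ n, seq (n + 1) = step (seq n) (n + 1) := fun n => rfl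
  set u : ℕ → ℝ := fun n => (seq n).1.1 with hu
  set v : ℕ → ℝ := fun n => (seq n).1.2 with hv
  have havoid : ∀ n, Icc (u n) (v n) ∩ F n = ∅ := by
    intro n
    cases n with
    | zero => exact hstep2 p0 0
    | succ n => exact hstep2 (seq n) (n + 1)
  have huv : ∀ n, u n < v n := fun n => (seq n).2.2.1
  have hnest : ∀ n, Icc (u (n+1)) (v (n+1)) ⊆ Icc (u n) (v n) := by
    intro n
    exact hstep1 (seq n) (n + 1)
  have hmono : ∀ n, u n ≤ u (n+1) ∧ v (n+1) ≤ v n := by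
    intro n
    exact (Icc_subset_Icc_iff (huv (n+1)).le).1 (hnest n)
  have humono : Monotone u := monotone_nat_of_le_succ (fun n => (hmono n).1)
  have hvanti : Antitone v := antitone_nat_of_succ_le (fun n => (hmono n).2)
  have hle : ∀ n m : ℕ, u n ≤ v m := by
    intro n m
    calc u n ≤ u (max n m) := humono (le_max_left n m)
    _ ≤ v (max n m) := (huv _).le
    _ ≤ v m := hvanti (le_max_right n m)
  have hbdd : BddAbove (range u) := ⟨v 0, by rintro x ⟨n, rfl⟩; exact hle n 0⟩
  set x := ⨆ n, u n with hx
  have hxmem : ∀ n, x ∈ Icc (u n) (v n) := by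
    intro n
    constructor
    · exact le_ciSup hbdd n
    · exact ciSup_le (fun m => hle m n)
  have hxab : x ∈ Icc a b := by
    have h0 := hxmem 0
    exact ⟨(seq 0).2.1.trans h0.1, h0.2.trans (seq 0).2.2.2.1⟩
  obtain ⟨n, hn⟩ : ∃ n, x ∈ F n := by simpa using hcover hxab
  have := havoid n
  rw [Set.eq_empty_iff_forall_notMem] at this
  exact this x ⟨hxmem n, hn⟩

lemma hsingle_sum {k : ℕ} (i0 : Fin k) (γ : ℚ) (x : Fin k → ℝ) :
    ∑ i, ((Pi.single i0 γ : Fin k → ℚ) i : ℝ) * x i = (γ : ℝ) * x i0 := by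
  rw [Finset.sum_eq_single i0]
  · simp
  · intro i _ hi; simp [Pi.single_apply, hi]
  · simp

lemma const_rel_const {k : ℕ} {a b : ℝ} (hab : a < b) (α : ℝ → EuclideanSpace ℝ (Fin k))
    (hcont : ContinuousOn α (Set.Icc a b)) (hunit : ∀ s ∈ Set.Icc a b, ‖α s‖ = 1)
    (V : Submodule ℚ (Fin k → ℚ))
    (hconst : ∀ s ∈ Set.Icc a b, rationalRelationSpace k (fun i => α s i) = V) :
    ∀ s ∈ Set.Icc a b, ∀ s' ∈ Set.Icc a b, α s = α s' := by
  have ha : a ∈ Icc a b := ⟨le_refl a, hab.le⟩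
  have hsumsq : ∀ s ∈ Icc a b, ∑ i, (α s i) ^ 2 = 1 := by
    intro s hs
    have h := hunit s hs
    rw [EuclideanSpace.norm_eq] at h
    rw [Real.sqrt_eq_one] at h
    simpa [Real.norm_eq_abs, sq_abs] using h
  obtain ⟨i0, hi0⟩ : ∃ i, α a i ≠ 0 := by
    by_contra hcon; push_neg at hcon
    have h := hsumsq a ha
    simp [hcon] at h
  have hcoordc : ∀ i : Fin k, ContinuousOn (fun s => α s i) (Icc a b) :=
    fun i => (PiLp.continuous_apply 2 _ i).comp_continuousOn hcont
  have hsumc : ∀ β : Fin k → ℚ, ContinuousOn (fun s => ∑ i, (β i : ℝ) * α s i) (Icc a b) := by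
    intro β
    apply continuousOn_finset_sum
    intro i _
    exact continuousOn_const.mul (hcoordc i)
  have hne0 : ∀ s ∈ Icc a b, α s i0 ≠ 0 := by
    intro s hs h0
    have h1 : Pi.single i0 (1 : ℚ) ∈ rationalRelationSpace k (fun i => α s i) := by
      rw [mem_rrs, hsingle_sum]; simp [h0]
    rw [hconst s hs, ← hconst a ha, mem_rrs, hsingle_sum] at h1
    simp at h1
    exact hi0 h1
  have hratio : ∀ β : Fin k → ℚ, ∀ s ∈ Icc a b, ∀ s' ∈ Icc a b,
      (∑ i, (β i : ℝ) * α s i) / α s i0 = (∑ i, (β i : ℝ) * α s' i) / α s' i0 := by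
    intro β
    set g : ℝ → ℝ := fun s => (∑ i, (β i : ℝ) * α s i) / α s i0 with hg
    have hgc : ContinuousOn g (Icc a b) := (hsumc β).div (hcoordc i0) hne0
    have hkey : ∀ (q : ℚ) (s2 : ℝ), s2 ∈ Icc a b → g s2 = (q : ℝ) →
        ∀ s ∈ Icc a b, g s = (q : ℝ) := by
      intro q s2 hs2 hq s hs
      have hsum2 : ∀ (t : ℝ), ∑ i, ((β - Pi.single i0 q : Fin k → ℚ) i : ℝ) * α t i
          = (∑ i, (β i : ℝ) * α t i) - (q : ℝ) * α t i0 := by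
        intro t
        have : ∀ i, ((β - Pi.single i0 q : Fin k → ℚ) i : ℝ) * α t i
            = (β i : ℝ) * α t i - ((Pi.single i0 q : Fin k → ℚ) i : ℝ) * α t i := by
          intro i; push_cast [Pi.sub_apply]; ring
        rw [Finset.sum_congr rfl (fun i _ => this i), Finset.sum_sub_distrib, hsingle_sum]
      have hmem : (β - Pi.single i0 q) ∈ rationalRelationSpace k (fun i => α s2 i) := by
        rw [mem_rrs, hsum2]
        have := (div_eq_iff (hne0 s2 hs2)).1 hq
        rw [this, sub_self]
      rw [hconst s2 hs2, ← hconst s hs, mem_rrs, hsum2, sub_eq_zero] at hmem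
      rw [hg]
      simp only
      rw [div_eq_iff (hne0 s hs), hmem]
    intro s hs s' hs'
    by_contra hne
    have hIVT : ∀ q : ℚ, (q : ℝ) ∈ uIcc (g s) (g s') → False := by
      intro q hqmem
      obtain ⟨s2, hs2, hgs2⟩ :=
        intermediate_value_uIcc (hgc.mono (uIcc_subset_Icc hs hs')) hqmem
      have hall := hkey q s2 (uIcc_subset_Icc hs hs' hs2) hgs2
      exact hne ((hall s hs).trans (hall s' hs').symm)
    rcases (Ne.lt_or_gt hne) with h | h
    · obtain ⟨q, hq1, hq2⟩ := exists_rat_btwn h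
      exact hIVT q (mem_uIcc.2 (Or.inl ⟨hq1.le, hq2.le⟩))
    · obtain ⟨q, hq1, hq2⟩ := exists_rat_btwn h
      exact hIVT q (mem_uIcc.2 (Or.inr ⟨hq1.le, hq2.le⟩))
  set c : Fin k → ℝ := fun i => α a i / α a i0 with hc
  have hcoord : ∀ s ∈ Icc a b, ∀ i, α s i = c i * α s i0 := by
    intro s hs i
    have h := hratio (Pi.single i 1) s hs a ha
    rw [hsingle_sum, hsingle_sum] at h
    simp only [Rat.cast_one, one_mul] at h
    rw [hc]
    simp only
    rw [← h, div_mul_cancel₀ _ (hne0 s hs)]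
  have hS : ∀ s ∈ Icc a b, (α s i0) ^ 2 * ∑ i, (c i) ^ 2 = 1 := by
    intro s hs
    have h1 := hsumsq s hs
    rw [← h1, Finset.mul_sum]
    apply Finset.sum_congr rfl
    intro i _
    rw [hcoord s hs i]; ring
  have hS0 : (∑ i, (c i) ^ 2) ≠ 0 := by
    intro h0
    have := hS a ha
    rw [h0, mul_zero] at this
    norm_num at this
  have hsign : ∀ s ∈ Icc a b, ∀ s' ∈ Icc a b, α s i0 = α s' i0 := by
    intro s hs s' hs'
    have hsq : (α s i0) ^ 2 = (α s' i0) ^ 2 :=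
      mul_right_cancel₀ hS0 (by rw [hS s hs, hS s' hs'])
    rcases sq_eq_sq_iff_eq_or_eq_neg.1 hsq with h | h
    · exact h
    · exfalso
      have hzero : (0 : ℝ) ∈ uIcc (α s i0) (α s' i0) := by
        rcases (hne0 s' hs').lt_or_gt with hneg | hpos
        · refine mem_uIcc.2 (Or.inr ⟨hneg.le, ?_⟩)
          rw [h]; linarith
        · refine mem_uIcc.2 (Or.inl ⟨?_, hpos.le⟩)
          rw [h]; linarith
      obtain ⟨t, ht, h0⟩ :=
        intermediate_value_uIcc ((hcoordc i0).mono (uIcc_subset_Icc hs hs')) hzero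
      exact hne0 t (uIcc_subset_Icc hs hs' ht) h0
  intro s hs s' hs'
  ext i
  rw [hcoord s hs i, hcoord s' hs' i, hsign s hs s' hs']

/-- A continuous nonconstant unit-valued path `α : [a,b] → ℝ^k` has nonconstant
rational-relation dimension function `D_α`. -/
theorem nonconstant_rational_relation_dimension
    (k : ℕ) (hk : 1 ≤ k) (a b : ℝ) (hab : a < b)
    (α : ℝ → EuclideanSpace ℝ (Fin k))
    (hcont : ContinuousOn α (Set.Icc a b))
    (hunit : ∀ s ∈ Set.Icc a b, ‖α s‖ = 1)
    (hnc : ¬ ∀ s ∈ Set.Icc a b, ∀ s' ∈ Set.Icc a b, α s = α s') :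
    ∃ s ∈ Set.Icc a b, ∃ s' ∈ Set.Icc a b, Dalpha α s ≠ Dalpha α s' := by
  by_contra hcon
  push_neg at hcon
  obtain ⟨f, hf⟩ : ∃ f : ℕ → Submodule ℚ (Fin k → ℚ), Function.Surjective f := by
    obtain ⟨g, hg⟩ : ∃ g : ℕ → Finset (Fin k → ℚ), Function.Surjective g :=
      exists_surjective_nat _
    refine ⟨fun n => Submodule.span ℚ ((g n : Set (Fin k → ℚ))), fun N => ?_⟩
    obtain ⟨S, hS⟩ := IsNoetherian.noetherian N
    obtain ⟨n, rfl⟩ := hg S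
    exact ⟨n, hS⟩
  have hsumc : ∀ β : Fin k → ℚ, ContinuousOn (fun s => ∑ i, (β i : ℝ) * α s i) (Set.Icc a b) := by
    intro β
    apply continuousOn_finset_sum
    intro i _
    exact continuousOn_const.mul ((PiLp.continuous_apply 2 _ i).comp_continuousOn hcont)
  set F : ℕ → Set ℝ :=
    fun n => {s | s ∈ Icc a b ∧ rationalRelationSpace k (fun i => α s i) = f n} with hF
  have hclosed : ∀ n, IsClosed (F n) := by
    intro n
    by_cases hex : ∃ s0, s0 ∈ Icc a b ∧ rationalRelationSpace k (fun i => α s0 i) = f n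
    · obtain ⟨s0, hs0, hV⟩ := hex
      have hEq : F n = ⋂ (β : (f n : Submodule ℚ (Fin k → ℚ))),
          (Icc a b ∩ (fun s => ∑ i, ((β : Fin k → ℚ) i : ℝ) * α s i) ⁻¹' {0}) := by
        ext s
        simp only [hF, mem_setOf_eq, mem_iInter, mem_inter_iff, mem_preimage,
          mem_singleton_iff]
        constructor
        · rintro ⟨hs, hrel⟩
          intro β
          refine ⟨hs, ?_⟩
          have hb : (β : Fin k → ℚ) ∈ rationalRelationSpace k (fun i => α s i) := by
            rw [hrel]; exact β.2
          exact mem_rrs.1 hb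
        · intro h
          have hs : s ∈ Icc a b := (h ⟨0, (f n).zero_mem⟩).1
          refine ⟨hs, ?_⟩
          have hle : f n ≤ rationalRelationSpace k (fun i => α s i) := by
            intro β hβ
            exact mem_rrs.2 (h ⟨β, hβ⟩).2
          have h1 := hcon s hs s0 hs0
          simp only [Dalpha] at h1
          rw [hV] at h1
          exact (Submodule.eq_of_le_of_finrank_le hle h1.le).symm
      rw [hEq]
      exact isClosed_iInter fun β =>
        (hsumc β).preimage_isClosed_of_isClosed isClosed_Icc isClosed_singleton
    · have : F n = ∅ := by
        rw [Set.eq_empty_iff_forall_notMem]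
        intro s hs
        exact hex ⟨s, hs.1, hs.2⟩
      rw [this]; exact isClosed_empty
  have hpair : ∀ m n, F m = F n ∨ Disjoint (F m) (F n) := by
    intro m n
    by_cases h : f m = f n
    · left; simp only [hF, h]
    · right
      rw [Set.disjoint_left]
      intro s hsm hsn
      exact h (hsm.2.symm.trans hsn.2)
  have hcover : Icc a b ⊆ ⋃ n, F n := by
    intro s hs
    obtain ⟨n, hn⟩ := hf (rationalRelationSpace k (fun i => α s i))
    exact mem_iUnion.2 ⟨n, hs, hn.symm⟩
  obtain ⟨m, hm⟩ := sierpinski_interval hab F hclosed hpair hcover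
  exact hnc (const_rel_const hab α hcont hunit (f m) (fun s hs => (hm hs).2))
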